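/- Let G be a finite simple graph with no isolated vertices and let H be the graph obtained from G by adding a new dominating vertex v (adjacent to every vertex of G). If {R, W1, W2} is a barbell partition of G, then {R ∪ {v}, W1, W2} is a barbell partition of H. -/

import Mathlib

open SimpleGraph

/-- A barbell partition of a graph `G`: a partition of the vertex set into
`R`, `W1`, `W2` with `W1, W2` nonempty, no edges between `W1` and `W2`, and
every vertex of `R` has a number of neighbors in each `Wi` different from 1. -/
def IsBarbellPartition {V : Type*} (G : SimpleGraph V) (R W1 W2 : Set V) : Prop :=
  R ∪ W1 ∪ W2 = Set.univ ∧ Disjoint R W1 ∧ Disjoint R W2 ∧ Disjoint W1 W2 ∧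
  W1.Nonempty ∧ W2.Nonempty ∧
  (∀ w1 ∈ W1, ∀ w2 ∈ W2, ¬ G.Adj w1 w2) ∧
  (∀ v ∈ R, (G.neighborSet v ∩ W1).ncard ≠ 1 ∧ (G.neighborSet v ∩ W2).ncard ≠ 1)

/-- `G` admits a barbell partition. -/
def HasBarbellPartition {V : Type*} (G : SimpleGraph V) : Prop :=
  ∃ R W1 W2 : Set V, IsBarbellPartition G R W1 W2

/-- A fort of `G`: a nonempty vertex set `F` such that no vertex outside `F`
has exactly one neighbor in `F`. -/
def IsFort {V : Type*} (G : SimpleGraph V) (F : Set V) : Prop :=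
  F.Nonempty ∧ ∀ v ∉ F, (G.neighborSet v ∩ F).ncard ≠ 1

/-- The graph obtained from `G` by adding a dominating vertex (`none`). -/
def addDomVertex {V : Type*} (G : SimpleGraph V) : SimpleGraph (Option V) where
  Adj x y :=
    match x, y with
    | some a, some b => G.Adj a b
    | some _, none => True
    | none, some _ => True
    | none, none => False
  symm := by
    constructor
    rintro (_ | a) (_ | b) h
    · exact h
    · trivial
    · trivial
    · exact h.symm
  loopless := by
    constructor
    rintro (_ | a) h
    · exact h
    · exact G.irrefl h

/-- If `G` has no isolated vertices and `{R, W1, W2}` is a barbell partition of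
`G`, then adding the dominating vertex to `R` gives a barbell partition of the
graph obtained from `G` by adding a dominating vertex. -/
theorem addDomVertex_barbellPartition {V : Type*} [Fintype V] (G : SimpleGraph V)
    (hiso : ∀ v : V, (G.neighborSet v).Nonempty)
    (R W1 W2 : Set V) (h : IsBarbellPartition G R W1 W2) :
    IsBarbellPartition (addDomVertex G)
      (insert none (some '' R)) (some '' W1) (some '' W2) := by
  obtain ⟨hcov, h1, h2, h12, hW1, hW2, hedge, hR⟩ := h
  have hmem : ∀ a : V, a ∈ R ∨ a ∈ W1 ∨ a ∈ W2 := by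
    intro a
    have : a ∈ R ∪ W1 ∪ W2 := hcov ▸ Set.mem_univ a
    simpa [Set.mem_union, or_assoc] using this
  have hinj : Function.Injective (some : V → Option V) := Option.some_injective V
  -- |W1|, |W2| ≥ 2 (more precisely ncard ≠ 1)
  have hWcard : ∀ (W W' : Set V), (∀ a : V, a ∈ R ∨ a ∈ W ∨ a ∈ W') → W.Nonempty →
      (∀ w1 ∈ W, ∀ w2 ∈ W', ¬ G.Adj w1 w2) →
      (∀ v ∈ R, (G.neighborSet v ∩ W).ncard ≠ 1) → W.ncard ≠ 1 := by
    intro W W' hmem' hne hE hRn hcard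
    obtain ⟨w, hWeq⟩ := Set.ncard_eq_one.mp hcard
    obtain ⟨u, hu⟩ := hiso w
    have huadj : G.Adj w u := hu
    have hune : u ≠ w := huadj.ne'
    have huW : u ∉ W := by rw [hWeq]; simpa using hune
    have huW' : u ∉ W' := fun huW' => hE w (by rw [hWeq]; rfl) u huW' huadj
    have huR : u ∈ R := by
      rcases hmem' u with h | h | h
      · exact h
      · exact absurd h huW
      · exact absurd h huW'
    apply hRn u huR
    have : G.neighborSet u ∩ W = {w} := by
      apply Set.eq_singleton_iff_unique_mem.mpr
      constructor
      · exact ⟨huadj.symm, by rw [hWeq]; rfl⟩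
      · intro x hx
        have : x ∈ W := hx.2
        rw [hWeq] at this; exact this
    rw [this, Set.ncard_singleton]
  have hW1card : W1.ncard ≠ 1 := hWcard W1 W2 hmem hW1 hedge (fun v hv => (hR v hv).1)
  have hW2card : W2.ncard ≠ 1 := by
    apply hWcard W2 W1 (fun a => (hmem a).imp_right Or.symm) hW2 _ (fun v hv => (hR v hv).2)
    intro w2 hw2 w1 hw1 hadj
    exact hedge w1 hw1 w2 hw2 hadj.symm
  have hsetR : ∀ (r : V) (W : Set V),
      (addDomVertex G).neighborSet (some r) ∩ (some '' W) = some '' (G.neighborSet r ∩ W) := by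
    intro r W
    ext x
    rcases x with _ | b
    · simp [addDomVertex, neighborSet]
    · simp only [Set.mem_inter_iff, Set.mem_image, mem_neighborSet]
      constructor
      · rintro ⟨hadj, c, hc, hcb⟩
        exact ⟨b, ⟨hadj, by rwa [← Option.some_inj.mp hcb]⟩, rfl⟩
      · rintro ⟨c, ⟨hadj, hc⟩, hcb⟩
        exact ⟨by rw [← Option.some_inj.mp hcb]; exact hadj, c, hc, hcb⟩
  have hsetN : ∀ (W : Set V),
      (addDomVertex G).neighborSet none ∩ (some '' W) = some '' W := by
    intro W
    apply Set.inter_eq_self_of_subset_right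
    rintro x ⟨b, hb, rfl⟩
    show (addDomVertex G).Adj none (some b)
    trivial
  refine ⟨?_, ?_, ?_, ?_, hW1.image _, hW2.image _, ?_, ?_⟩
  · ext x
    rcases x with _ | a
    · simp
    · simp only [Set.mem_union, Set.mem_insert_iff, Set.mem_image, Set.mem_univ, iff_true]
      rcases hmem a with h | h | h
      · exact Or.inl (Or.inl (Or.inr ⟨a, h, rfl⟩))
      · exact Or.inl (Or.inr ⟨a, h, rfl⟩)
      · exact Or.inr ⟨a, h, rfl⟩
  · rw [Set.disjoint_left]
    rintro x hx ⟨b, hb, rfl⟩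
    rcases Set.mem_insert_iff.mp hx with h | ⟨c, hc, hcb⟩
    · exact Option.some_ne_none b h
    · obtain rfl : c = b := Option.some_inj.mp hcb
      exact h1.le_bot ⟨hc, hb⟩
  · rw [Set.disjoint_left]
    rintro x hx ⟨b, hb, rfl⟩
    rcases Set.mem_insert_iff.mp hx with h | ⟨c, hc, hcb⟩
    · exact Option.some_ne_none b h
    · obtain rfl : c = b := Option.some_inj.mp hcb
      exact h2.le_bot ⟨hc, hb⟩
  · exact (Set.disjoint_image_iff hinj).mpr h12
  · rintro x ⟨a, ha, rfl⟩ y ⟨b, hb, rfl⟩ hadj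
    exact hedge a ha b hb hadj
  · rintro x hx
    rcases Set.mem_insert_iff.mp hx with rfl | ⟨r, hr, rfl⟩
    · rw [hsetN W1, hsetN W2, Set.ncard_image_of_injective _ hinj,
        Set.ncard_image_of_injective _ hinj]
      exact ⟨hW1card, hW2card⟩
    · rw [hsetR r W1, hsetR r W2, Set.ncard_image_of_injective _ hinj,
        Set.ncard_image_of_injective _ hinj]
      exact hR r hr
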